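/- Let K be an algebraically closed field and g > 1 an integer with char(K) not dividing 2(2g+1). Let b ∈ K with b ≠ 0 and b ≠ −1, and let v1(x), v2(x), v3(x) ∈ K[x] be polynomials of degree at most g such that x^{2g+1} + v1(x)^2 = (x−b)^{2g+1} + v2(x)^2 = (x+1)^{2g+1} + v3(x)^2. Then there exist g-element subsets I, J ⊆ M(2g+1) and nonzero μ, ν ∈ K such that v1(x) = (μ/2)·Η_I(x) + ((2g+1)/(2μ))·Η_{∁I}(x) = (ν/2)·Ψ_{J,b}(x) − ((2g+1)b/(2ν))·Ψ_{∁J,b}(x). -/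

import Mathlib

open Polynomial Finset

/-- `Mset K n` is the set of `n`-th roots of unity in `K` other than `1`. -/
noncomputable def Mset (K : Type*) [Field K] (n : ℕ) : Finset K :=
  open scoped Classical in
  (Polynomial.nthRootsFinset n (1 : K)).filter (· ≠ 1)

/-- `EtaP I = ∏_{ε ∈ I} (x - η(ε))` where `η(ε) = 1/(ε - 1)`. -/
noncomputable def EtaP {K : Type*} [Field K] (I : Finset K) : K[X] :=
  ∏ ε ∈ I, (X - C ((ε - 1)⁻¹))

/-- `PsiP I b = ∏_{ε ∈ I} (x + b·η(ε))` where `η(ε) = 1/(ε - 1)`. -/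
noncomputable def PsiP {K : Type*} [Field K] (I : Finset K) (b : K) : K[X] :=
  ∏ ε ∈ I, (X + C (b * (ε - 1)⁻¹))

section Aux

variable {K : Type*} [Field K] [DecidableEq K]

lemma Mset_eq_erase (n : ℕ) : Mset K n = (nthRootsFinset n (1 : K)).erase 1 := by
  classical
  ext a
  simp [Mset, Finset.mem_filter, Finset.mem_erase, and_comm]

variable [IsAlgClosed K] {n : ℕ}

lemma exists_prim (hn : (n : K) ≠ 0) : ∃ ζ : K, IsPrimitiveRoot ζ n := by
  have : NeZero ((n : ℕ) : K) := ⟨hn⟩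
  exact HasEnoughRootsOfUnity.exists_primitiveRoot K n

lemma npos_of_cast (hn : (n : K) ≠ 0) : 0 < n := by
  rcases Nat.eq_zero_or_pos n with h | h
  · subst h; simp at hn
  · exact h

lemma Mset_card (hn : (n : K) ≠ 0) : (Mset K n).card = n - 1 := by
  obtain ⟨ζ, hζ⟩ := exists_prim hn
  rw [Mset_eq_erase, Finset.card_erase_of_mem (one_mem_nthRootsFinset (npos_of_cast hn)),
    hζ.card_nthRootsFinset]

lemma prod_X_sub_Mset (hn : (n : K) ≠ 0) :
    ∏ ε ∈ Mset K n, (X - C ε) = ∑ i ∈ Finset.range n, (X : K[X]) ^ i := by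
  obtain ⟨ζ, hζ⟩ := exists_prim hn
  have hpos := npos_of_cast hn
  apply mul_left_cancel₀ (X_sub_C_ne_zero (1 : K))
  have h1 : (X - C (1:K)) * ∏ ε ∈ Mset K n, (X - C ε) = X ^ n - 1 := by
    rw [Mset_eq_erase,
      Finset.mul_prod_erase (nthRootsFinset n (1 : K)) (fun ε => X - C ε)
        (one_mem_nthRootsFinset hpos),
      ← X_pow_sub_one_eq_prod hpos hζ]
  rw [h1]
  have h2 := geom_sum_mul (X : K[X]) n
  rw [map_one]
  linear_combination -h2

lemma prod_one_sub_Mset (hn : (n : K) ≠ 0) : ∏ ε ∈ Mset K n, (1 - ε) = (n : K) := by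
  have := congrArg (eval 1) (prod_X_sub_Mset hn)
  simpa [eval_prod, eval_finset_sum] using this

lemma key_identity (hn : (n : K) ≠ 0) (hodd : Odd n) (c : K) :
    (X : K[X]) ^ n - (X - C c) ^ n
      = C ((n : K) * c) * ∏ ε ∈ Mset K n, (X + C (c * (ε - 1)⁻¹)) := by
  obtain ⟨ζ, hζ⟩ := exists_prim hn
  have hpos := npos_of_cast hn
  apply Polynomial.funext
  intro x
  simp only [eval_sub, eval_pow, eval_X, eval_C, eval_mul, eval_prod, eval_add]
  have hps := hζ.pow_sub_pow_eq_prod_sub_mul (x - c) x hpos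
  rw [← Finset.mul_prod_erase _ (fun ζ => x - c - ζ * x)
      (one_mem_nthRootsFinset hpos)] at hps
  have hfac : ∀ ε ∈ (nthRootsFinset n (1 : K)).erase 1,
      x - c - ε * x = (1 - ε) * (x + c * (ε - 1)⁻¹) := by
    intro ε hε
    have h1 : ε - 1 ≠ 0 := sub_ne_zero.2 (Finset.mem_erase.1 hε).1
    field_simp
    ring
  rw [Finset.prod_congr rfl hfac, Finset.prod_mul_distrib] at hps
  have hM : ((nthRootsFinset n (1 : K)).erase 1) = Mset K n := (Mset_eq_erase n).symm
  rw [hM, prod_one_sub_Mset hn] at hps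
  -- hps : (x - c)^n - x^n = (x - c - 1*x) * ((n:K) * ∏ ...)
  have : x - c - 1 * x = -c := by ring
  rw [this] at hps
  linear_combination -hps

/-- Factorization of a product of distinct linear factors into two polynomials. -/
lemma fact_split (S : Finset K) (r : K → K) (hr : Set.InjOn r S) {A B : K[X]} {c : K}
    (hc : c ≠ 0) {m : ℕ} (hS : S.card = 2 * m) (hA : A.natDegree ≤ m) (hB : B.natDegree ≤ m)
    (hprod : A * B = C c * ∏ ε ∈ S, (X - C (r ε))) :
    ∃ T : Finset K, T ⊆ S ∧ T.card = m ∧ ∃ u v : K, u ≠ 0 ∧ v ≠ 0 ∧ u * v = c ∧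
      A = C u * ∏ ε ∈ T, (X - C (r ε)) ∧ B = C v * ∏ ε ∈ S \ T, (X - C (r ε)) := by
  classical
  have hDS0 : (∏ ε ∈ S, (X - C (r ε)) : K[X]) ≠ 0 :=
    prod_ne_zero_iff.2 fun ε _ => X_sub_C_ne_zero _
  have hAB0 : A * B ≠ 0 := by
    rw [hprod]; exact mul_ne_zero (by simpa using hc) hDS0
  have hA0 : A ≠ 0 := fun h => hAB0 (by rw [h, zero_mul])
  have hB0 : B ≠ 0 := fun h => hAB0 (by rw [h, mul_zero])
  set T : Finset K := S.filter (fun ε => A.eval (r ε) = 0) with hT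
  have hTS : T ⊆ S := Finset.filter_subset _ _
  -- divisibility helper
  have hdvd : ∀ (P : K[X]) (U : Finset K), P ≠ 0 → U ⊆ S → (∀ ε ∈ U, P.eval (r ε) = 0) →
      ∃ Q : K[X], P = (∏ ε ∈ U, (X - C (r ε))) * Q := by
    intro P U hP0 hUS hroot
    have himg : ∏ a ∈ U.image r, ((X : K[X]) - C a) = ∏ ε ∈ U, ((X : K[X]) - C (r ε)) :=
      Finset.prod_image (fun x hx y hy hxy => hr (hUS hx) (hUS hy) hxy)
    have hle : ((U.image r).val : Multiset K) ≤ P.roots := by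
      rw [Multiset.le_iff_count]
      intro a
      by_cases ha : a ∈ (U.image r).val
      · have h1 : (U.image r).val.count a = 1 :=
          Multiset.count_eq_one_of_mem (U.image r).nodup ha
        rw [h1]
        rw [Multiset.one_le_count_iff_mem]
        obtain ⟨ε, hε, rfl⟩ := Finset.mem_image.1 ha
        exact (Polynomial.mem_roots hP0).2 (hroot ε hε)
      · rw [Multiset.count_eq_zero_of_notMem ha]; exact Nat.zero_le _
    have := (Multiset.prod_X_sub_C_dvd_iff_le_roots hP0 (U.image r).val).2 hle
    rw [← Finset.prod_eq_multiset_prod, himg] at this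
    obtain ⟨Q, hQ⟩ := this
    exact ⟨Q, hQ⟩
  -- A vanishes on T, B vanishes on S \ T
  obtain ⟨A₁, hA₁⟩ := hdvd A T hA0 hTS (fun ε hε => (Finset.mem_filter.1 hε).2)
  have hBroot : ∀ ε ∈ S \ T, B.eval (r ε) = 0 := by
    intro ε hε
    obtain ⟨hεS, hεT⟩ := Finset.mem_sdiff.1 hε
    have hAne : A.eval (r ε) ≠ 0 := by
      intro h; exact hεT (Finset.mem_filter.2 ⟨hεS, h⟩)
    have hev : (A * B).eval (r ε) = 0 := by
      rw [hprod, eval_mul, eval_prod]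
      have : (X - C (r ε) : K[X]).eval (r ε) = 0 := by simp
      rw [Finset.prod_eq_zero hεS this, mul_zero]
    rw [eval_mul] at hev
    exact (mul_eq_zero.1 hev).resolve_left hAne
  obtain ⟨B₁, hB₁⟩ := hdvd B (S \ T) hB0 (Finset.sdiff_subset) hBroot
  have hA₁0 : A₁ ≠ 0 := fun h => hA0 (by rw [hA₁, h, mul_zero])
  have hB₁0 : B₁ ≠ 0 := fun h => hB0 (by rw [hB₁, h, mul_zero])
  have hDT0 : (∏ ε ∈ T, (X - C (r ε)) : K[X]) ≠ 0 :=
    prod_ne_zero_iff.2 fun ε _ => X_sub_C_ne_zero _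
  have hDT'0 : (∏ ε ∈ S \ T, (X - C (r ε)) : K[X]) ≠ 0 :=
    prod_ne_zero_iff.2 fun ε _ => X_sub_C_ne_zero _
  -- A₁ * B₁ = C c
  have hsd : (∏ ε ∈ S \ T, (X - C (r ε)) : K[X]) * ∏ ε ∈ T, (X - C (r ε))
      = ∏ ε ∈ S, (X - C (r ε)) := Finset.prod_sdiff hTS
  have hcc : A₁ * B₁ = C c := by
    apply mul_left_cancel₀ hDS0
    rw [← hsd]
    calc (∏ ε ∈ S \ T, (X - C (r ε)) : K[X]) * (∏ ε ∈ T, (X - C (r ε))) * (A₁ * B₁)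
        = ((∏ ε ∈ T, (X - C (r ε))) * A₁) * ((∏ ε ∈ S \ T, (X - C (r ε))) * B₁) := by ring
      _ = A * B := by rw [← hA₁, ← hB₁]
      _ = C c * ((∏ ε ∈ S \ T, (X - C (r ε))) * ∏ ε ∈ T, (X - C (r ε))) := by
            rw [hprod, hsd]
      _ = (∏ ε ∈ S \ T, (X - C (r ε))) * (∏ ε ∈ T, (X - C (r ε))) * C c := by ring
  have hdegsum : A₁.natDegree + B₁.natDegree = 0 := by
    have := natDegree_mul hA₁0 hB₁0
    rw [hcc, natDegree_C] at this
    omega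
  obtain ⟨u, hu⟩ := natDegree_eq_zero.1 (by omega : A₁.natDegree = 0)
  obtain ⟨v, hv⟩ := natDegree_eq_zero.1 (by omega : B₁.natDegree = 0)
  have huv : u * v = c := by
    have : C (u * v) = C c := by rw [map_mul, hu, hv, hcc]
    exact C_injective this
  have hu0 : u ≠ 0 := fun h => hA₁0 (by rw [← hu, h, map_zero])
  have hv0 : v ≠ 0 := fun h => hB₁0 (by rw [← hv, h, map_zero])
  -- degrees
  have hdT : (∏ ε ∈ T, (X - C (r ε)) : K[X]).natDegree = T.card := by
    rw [natDegree_prod _ _ (fun ε _ => X_sub_C_ne_zero _)]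
    simp [natDegree_X_sub_C]
  have hdT' : (∏ ε ∈ S \ T, (X - C (r ε)) : K[X]).natDegree = (S \ T).card := by
    rw [natDegree_prod _ _ (fun ε _ => X_sub_C_ne_zero _)]
    simp [natDegree_X_sub_C]
  have hdegA : A.natDegree = T.card := by
    rw [hA₁, natDegree_mul hDT0 hA₁0, hdT]
    omega
  have hdegB : B.natDegree = (S \ T).card := by
    rw [hB₁, natDegree_mul hDT'0 hB₁0, hdT']
    omega
  have hcardsd : (S \ T).card = S.card - T.card := Finset.card_sdiff_of_subset hTS
  have hTcard : T.card = m := by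
    have h1 : T.card ≤ m := hdegA ▸ hA
    have h2 : (S \ T).card ≤ m := hdegB ▸ hB
    have h3 : T.card ≤ S.card := Finset.card_le_card hTS
    omega
  refine ⟨T, hTS, hTcard, u, v, hu0, hv0, huv, ?_, ?_⟩
  · rw [hA₁, ← hu]; ring
  · rw [hB₁, ← hv]; ring

end Aux

theorem stmt_3 (K : Type*) [Field K] [IsAlgClosed K] [DecidableEq K] (g : ℕ) (hg : 1 < g)
    (hchar : ((2 * (2 * g + 1) : ℕ) : K) ≠ 0) (b : K) (hb0 : b ≠ 0) (hb1 : b ≠ -1)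
    (v1 v2 v3 : K[X])
    (hv1 : v1.natDegree ≤ g) (hv2 : v2.natDegree ≤ g) (hv3 : v3.natDegree ≤ g)
    (h12 : X ^ (2 * g + 1) + v1 ^ 2 = (X - C b) ^ (2 * g + 1) + v2 ^ 2)
    (h13 : X ^ (2 * g + 1) + v1 ^ 2 = (X + 1) ^ (2 * g + 1) + v3 ^ 2) :
    ∃ (I J : Finset K), I ⊆ Mset K (2 * g + 1) ∧ J ⊆ Mset K (2 * g + 1) ∧
      I.card = g ∧ J.card = g ∧
      ∃ (μ ν : K), μ ≠ 0 ∧ ν ≠ 0 ∧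
        v1 = C (μ / 2) * EtaP I +
              C (((2 * g + 1 : ℕ) : K) / (2 * μ)) * EtaP (Mset K (2 * g + 1) \ I) ∧
        v1 = C (ν / 2) * PsiP J b -
              C (((2 * g + 1 : ℕ) : K) * b / (2 * ν)) * PsiP (Mset K (2 * g + 1) \ J) b := by
  set n : ℕ := 2 * g + 1 with hn_def
  have h2K : (2 : K) ≠ 0 := by
    intro h
    apply hchar
    push_cast
    rw [h]; ring
  have hnK : ((n : ℕ) : K) ≠ 0 := by
    intro h
    apply hchar
    push_cast at h ⊢
    rw [h]; ring
  have hodd : Odd n := ⟨g, by omega⟩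
  have hMcard : (Mset K n).card = 2 * g := by
    rw [Mset_card hnK]; omega
  -- Eta part
  have e1 := key_identity hnK hodd (-1 : K)
  have e1' : ((X : K[X]) + 1) ^ n - X ^ n = C ((n : K)) * EtaP (Mset K n) := by
    have hXC : (X - C (-1 : K)) = X + 1 := by
      rw [map_neg, map_one, sub_neg_eq_add]
    rw [hXC] at e1
    have hpr : ∏ ε ∈ Mset K n, ((X : K[X]) + C ((-1) * (ε - 1)⁻¹)) = EtaP (Mset K n) := by
      refine Finset.prod_congr rfl fun ε _ => ?_
      rw [neg_one_mul, map_neg, ← sub_eq_add_neg]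
    rw [hpr] at e1
    have hCn : C ((n : K) * (-1)) = -C ((n : K)) := by rw [mul_neg_one, map_neg]
    rw [hCn] at e1
    linear_combination -e1
  have hfac13 : (v1 - v3) * (v1 + v3) = C ((n : K)) * ∏ ε ∈ Mset K n, (X - C ((ε - 1)⁻¹)) := by
    have : EtaP (Mset K n) = ∏ ε ∈ Mset K n, (X - C ((ε - 1)⁻¹)) := rfl
    rw [← this]
    linear_combination h13 + e1'
  have hrinj1 : Set.InjOn (fun ε : K => (ε - 1)⁻¹) (Mset K n) := by
    intro x _ y _ h
    have := inv_injective h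
    linear_combination this
  obtain ⟨I, hIS, hIcard, u, v, hu0, hv0, huv, hAI, hBI⟩ :=
    fact_split (Mset K n) (fun ε => (ε - 1)⁻¹) hrinj1 hnK hMcard
      (le_trans (natDegree_sub_le v1 v3) (max_le hv1 hv3))
      (le_trans (natDegree_add_le v1 v3) (max_le hv1 hv3)) hfac13
  -- Psi part
  have e2 := key_identity hnK hodd b
  have hfac12 : (v1 - v2) * (v1 + v2)
      = C (-((n : K) * b)) * ∏ ε ∈ Mset K n, (X - C (-(b * (ε - 1)⁻¹))) := by
    have hpr : ∏ ε ∈ Mset K n, ((X : K[X]) - C (-(b * (ε - 1)⁻¹)))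
        = ∏ ε ∈ Mset K n, ((X : K[X]) + C (b * (ε - 1)⁻¹)) := by
      refine Finset.prod_congr rfl fun ε _ => ?_
      rw [map_neg, sub_neg_eq_add]
    rw [hpr, map_neg, neg_mul]
    linear_combination h12 - e2
  have hrinj2 : Set.InjOn (fun ε : K => -(b * (ε - 1)⁻¹)) (Mset K n) := by
    intro x _ y _ h
    have h1 : b * (x - 1)⁻¹ = b * (y - 1)⁻¹ := neg_injective h
    have h2 : (x - 1)⁻¹ = (y - 1)⁻¹ := mul_left_cancel₀ hb0 h1
    have := inv_injective h2
    linear_combination this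
  have hnb0 : (-((n : K) * b)) ≠ 0 := by
    simp only [ne_eq, neg_eq_zero, mul_eq_zero, not_or]
    exact ⟨hnK, hb0⟩
  obtain ⟨J, hJS, hJcard, p, q, hp0, hq0, hpq, hAJ, hBJ⟩ :=
    fact_split (Mset K n) (fun ε => -(b * (ε - 1)⁻¹)) hrinj2 hnb0 hMcard
      (le_trans (natDegree_sub_le v1 v2) (max_le hv1 hv2))
      (le_trans (natDegree_add_le v1 v2) (max_le hv1 hv2)) hfac12
  -- assemble
  refine ⟨I, J, hIS, hJS, hIcard, hJcard, u, p, hu0, hp0, ?_, ?_⟩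
  · -- v1 = C (u/2) * EtaP I + C (n/(2u)) * EtaP (Mset \ I)
    have hrat : ((n : K)) / (2 * u) = v / 2 := by
      field_simp
      linear_combination -huv
    rw [hrat]
    have hC2 : (C (2 : K) : K[X]) ≠ 0 := C_ne_zero.mpr h2K
    apply mul_left_cancel₀ hC2
    have c1 : C (2 : K) * C (u / 2) = C u := by
      rw [← map_mul]; congr 1; field_simp
    have c2 : C (2 : K) * C (v / 2) = C v := by
      rw [← map_mul]; congr 1; field_simp
    have hC2' : (C (2 : K) : K[X]) = 2 := map_ofNat C 2
    calc C (2 : K) * v1 = (v1 - v3) + (v1 + v3) := by rw [hC2']; ring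
      _ = C u * EtaP I + C v * EtaP (Mset K n \ I) := by rw [hAI, hBI]; rfl
      _ = C (2:K) * (C (u / 2) * EtaP I + C (v / 2) * EtaP (Mset K n \ I)) := by
          rw [mul_add, ← mul_assoc, ← mul_assoc, c1, c2]
  · -- v1 = C (p/2) * PsiP J b - C (n*b/(2p)) * PsiP (Mset \ J) b
    have hprJ : ∀ (T : Finset K),
        (∏ ε ∈ T, ((X : K[X]) - C (-(b * (ε - 1)⁻¹)))) = PsiP T b := by
      intro T
      refine Finset.prod_congr rfl fun ε _ => ?_
      rw [map_neg, sub_neg_eq_add]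
    rw [hprJ] at hAJ hBJ
    have hrat : ((n : K)) * b / (2 * p) = -(q / 2) := by
      field_simp
      linear_combination hpq
    rw [hrat, map_neg, neg_mul, sub_neg_eq_add]
    have hC2 : (C (2 : K) : K[X]) ≠ 0 := C_ne_zero.mpr h2K
    apply mul_left_cancel₀ hC2
    have c1 : C (2 : K) * C (p / 2) = C p := by
      rw [← map_mul]; congr 1; field_simp
    have c2 : C (2 : K) * C (q / 2) = C q := by
      rw [← map_mul]; congr 1; field_simp
    have hC2' : (C (2 : K) : K[X]) = 2 := map_ofNat C 2
    calc C (2 : K) * v1 = (v1 - v2) + (v1 + v2) := by rw [hC2']; ring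
      _ = C p * PsiP J b + C q * PsiP (Mset K n \ J) b := by rw [hAJ, hBJ]
      _ = C (2:K) * (C (p / 2) * PsiP J b + C (q / 2) * PsiP (Mset K n \ J) b) := by
          rw [mul_add, ← mul_assoc, ← mul_assoc, c1, c2]
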